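/- arXiv:math/0304256 — 2 statements merged into one kernel-verified Lean document; each statement's English description precedes it below -/
import Mathlib

section
/- Let T be a Jacobi flow along a unit-speed geodesic c and suppose the curvature satisfies ⟨R(u,c'(s))c'(s),u⟩ ≤ Δ(s) for unit u. Then ‖T(s)u‖ ≥ f_Δ(s)‖u‖ for all s on which f_Δ is positive, where f_Δ solves f'' + Δf = 0 with the initial conditions matching those of T (f(0)=0, f'(0)=1 in the conjugate-point case; f(0)=1, f'(0)=0 in the focal case with A=0). -/
open scoped RealInnerProductSpace
open Filter Set Topology

private lemma monoOn_aux {φ ψ : ℝ → ℝ} {τ : ℝ}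
    (hd : ∀ t ∈ Set.Ioc (0:ℝ) τ, HasDerivAt φ (ψ t) t)
    (h0 : ∀ t ∈ Set.Ioc (0:ℝ) τ, 0 ≤ ψ t) :
    MonotoneOn φ (Set.Ioc 0 τ) := by
  intro x hx y hy hxy
  have hsub : Set.Icc x y ⊆ Set.Ioc 0 τ := fun z hz =>
    ⟨lt_of_lt_of_le hx.1 hz.1, le_trans hz.2 hy.2⟩
  have hmono := monotoneOn_of_deriv_nonneg (convex_Icc x y)
    (fun z hz => (hd z (hsub hz)).continuousAt.continuousWithinAt)
    (fun z hz => by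
      have hz' : z ∈ Set.Icc x y := by
        rw [interior_Icc] at hz; exact Ioo_subset_Icc_self hz
      exact ((hd z (hsub hz')).differentiableAt).differentiableWithinAt)
    (fun z hz => by
      have hz' : z ∈ Set.Icc x y := by
        rw [interior_Icc] at hz; exact Ioo_subset_Icc_self hz
      rw [(hd z (hsub hz')).deriv]; exact h0 z (hsub hz'))
  exact hmono (left_mem_Icc.mpr hxy) (right_mem_Icc.mpr hxy) hxy

private lemma jacobi_aux {E : Type*} [NormedAddCommGroup E] [InnerProductSpace ℝ E]
    (Δ : ℝ → ℝ) (v w z : ℝ → E) (f f' : ℝ → ℝ) (c : ℝ)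
    (hv : ∀ t, HasDerivAt v (w t) t)
    (hw : ∀ t, HasDerivAt w (z t) t)
    (hb : ∀ t, -(Δ t * ‖v t‖ ^ 2) ≤ ⟪z t, v t⟫)
    (hf : ∀ t, HasDerivAt f (f' t) t)
    (hf' : ∀ t, HasDerivAt f' (-(Δ t * f t)) t)
    (hq0 : Tendsto (fun t => ‖v t‖ / f t) (𝓝[>] (0:ℝ)) (𝓝 c))
    (hW0 : Tendsto (fun t => ⟪w t, v t⟫ / ‖v t‖ * f t - ‖v t‖ * f' t) (𝓝[>] (0:ℝ)) (𝓝 0))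
    (τ : ℝ) (hτ : 0 < τ)
    (hfpos : ∀ t ∈ Set.Ioc (0:ℝ) τ, 0 < f t)
    (hvne : ∀ t ∈ Set.Ioc (0:ℝ) τ, v t ≠ 0) :
    c * f τ ≤ ‖v τ‖ := by
  have hτm : τ ∈ Set.Ioc (0:ℝ) τ := ⟨hτ, le_refl τ⟩
  -- derivative of the norm
  have hgder : ∀ t, v t ≠ 0 → HasDerivAt (fun s => ‖v s‖) (⟪w t, v t⟫ / ‖v t‖) t := by
    intro t ht
    have hG : HasDerivAt (fun s => ⟪v s, v s⟫) (2 * ⟪w t, v t⟫) t := by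
      simpa [two_mul, real_inner_comm] using (hv t).inner ℝ (hv t)
    have hip : (0:ℝ) < ⟪v t, v t⟫ := by
      rw [real_inner_self_eq_norm_sq]; exact pow_pos (norm_pos_iff.mpr ht) 2
    have h1 := (Real.hasDerivAt_sqrt hip.ne').comp t hG
    have heq : (fun s => Real.sqrt ⟪v s, v s⟫) = fun s => ‖v s‖ := by
      funext s; rw [real_inner_self_eq_norm_mul_norm, Real.sqrt_mul_self (norm_nonneg _)]
    have hsq : Real.sqrt ⟪v t, v t⟫ = ‖v t‖ := by
      rw [real_inner_self_eq_norm_mul_norm, Real.sqrt_mul_self (norm_nonneg _)]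
    rw [Function.comp_def, heq] at h1
    refine h1.congr_deriv ?_
    rw [hsq]
    have h2 : ‖v t‖ ≠ 0 := norm_ne_zero_iff.mpr ht
    field_simp
  have hader : ∀ t, HasDerivAt (fun s => ⟪w s, v s⟫) (⟪z t, v t⟫ + ‖w t‖ ^ 2) t := by
    intro t
    have := (hw t).inner ℝ (hv t)
    simpa [real_inner_self_eq_norm_sq, add_comm] using this
  set W : ℝ → ℝ := fun t => ⟪w t, v t⟫ / ‖v t‖ * f t - ‖v t‖ * f' t with hWdef
  set q : ℝ → ℝ := fun t => ‖v t‖ / f t with hqdef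
  have hWder : ∀ t ∈ Set.Ioc (0:ℝ) τ, ∃ D, HasDerivAt W D t ∧ 0 ≤ D := by
    intro t ht
    have hvt := hvne t ht
    have hg0 : (0:ℝ) < ‖v t‖ := norm_pos_iff.mpr hvt
    have hgne : ‖v t‖ ≠ 0 := hg0.ne'
    have hd := (((hader t).div (hgder t hvt) hgne).mul (hf t)).sub
      ((hgder t hvt).mul (hf' t))
    have hd' : HasDerivAt W
        (f t * (((⟪z t, v t⟫ + ‖w t‖ ^ 2) * ‖v t‖ ^ 2 - ⟪w t, v t⟫ ^ 2
          + Δ t * ‖v t‖ ^ 4) / ‖v t‖ ^ 3)) t := by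
      refine hd.congr_deriv ?_
      simp only [Pi.div_apply]
      field_simp
      ring
    refine ⟨_, hd', ?_⟩
    have hcs := real_inner_mul_inner_self_le (w t) (v t)
    rw [real_inner_self_eq_norm_sq, real_inner_self_eq_norm_sq] at hcs
    have hbt := hb t
    have hfnn := (hfpos t ht).le
    apply mul_nonneg hfnn
    apply div_nonneg _ (by positivity)
    have hzb : (0:ℝ) ≤ ⟪z t, v t⟫ + Δ t * ‖v t‖ ^ 2 := by linarith
    nlinarith [mul_nonneg hzb (sq_nonneg ‖v t‖), hcs]
  have hWmono : MonotoneOn W (Set.Ioc 0 τ) := by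
    refine monoOn_aux (ψ := deriv W) ?_ ?_
    · intro t ht
      obtain ⟨D, hD, _⟩ := hWder t ht
      rw [hD.deriv]; exact hD
    · intro t ht
      obtain ⟨D, hD, hD0⟩ := hWder t ht
      rw [hD.deriv]; exact hD0
  have hWnonneg : ∀ t ∈ Set.Ioc (0:ℝ) τ, 0 ≤ W t := by
    intro t ht
    refine le_of_tendsto hW0 ?_
    filter_upwards [Ioo_mem_nhdsGT_of_mem (left_mem_Ico.mpr ht.1)] with x hx
    exact hWmono ⟨hx.1, hx.2.le.trans ht.2⟩ ht hx.2.le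
  have hqmono : MonotoneOn q (Set.Ioc 0 τ) := by
    refine monoOn_aux (ψ := fun t => W t / f t ^ 2) ?_ ?_
    · intro t ht
      exact (hgder t (hvne t ht)).div (hf t) (hfpos t ht).ne'
    · intro t ht
      exact div_nonneg (hWnonneg t ht) (by positivity)
  have hcq : c ≤ q τ := by
    refine le_of_tendsto hq0 ?_
    filter_upwards [Ioo_mem_nhdsGT_of_mem (left_mem_Ico.mpr hτ)] with x hx
    exact hqmono ⟨hx.1, hx.2.le⟩ hτm hx.2.le
  have hfτ := hfpos τ hτm
  have hq' : q τ * f τ = ‖v τ‖ := div_mul_cancel₀ _ hfτ.ne'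
  nlinarith [hcq, hfτ, hq']

/-- Lower comparison estimate for the Jacobi flow. Let `T` be the Jacobi flow along a
unit-speed geodesic `c` (in the parallel trivialization, with symmetric pulled-back
curvature operator `R`), and suppose `⟨R s u, u⟩ ≤ Δ(s) ‖u‖²`. Let `f = f_Δ` solve the
scalar comparison equation `f'' + Δ f = 0` with initial conditions matching those of `T`:
either `T 0 = 0`, `T' 0 = id`, `f 0 = 0`, `f' 0 = 1` (conjugate-point case) or
`T 0 = id`, `T' 0 = 0`, `f 0 = 1`, `f' 0 = 0` (focal case with `A = 0`). Then
`‖T s u‖ ≥ f_Δ(s) ‖u‖` for all `s ≥ 0` on which `f_Δ` stays positive. -/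
theorem jacobiFlow_norm_ge_comparison
    {E : Type*} [NormedAddCommGroup E] [InnerProductSpace ℝ E]
    (R : ℝ → E →L[ℝ] E)
    (hRsymm : ∀ t (u v : E), ⟪R t u, v⟫ = ⟪u, R t v⟫)
    (Δ : ℝ → ℝ)
    (hbound : ∀ s (u : E), ⟪R s u, u⟫ ≤ Δ s * ‖u‖ ^ 2)
    (T T' : ℝ → E →L[ℝ] E)
    (hT : ∀ t, HasDerivAt T (T' t) t)
    (hT' : ∀ t, HasDerivAt T' (-((R t).comp (T t))) t)
    (f f' : ℝ → ℝ)
    (hf : ∀ s, HasDerivAt f (f' s) s)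
    (hf' : ∀ s, HasDerivAt f' (-(Δ s * f s)) s)
    (hinit : (T 0 = 0 ∧ T' 0 = ContinuousLinearMap.id ℝ E ∧ f 0 = 0 ∧ f' 0 = 1) ∨
      (T 0 = ContinuousLinearMap.id ℝ E ∧ T' 0 = 0 ∧ f 0 = 1 ∧ f' 0 = 0))
    (s : ℝ) (hs : 0 ≤ s)
    (hfc : ∀ t ∈ Set.Ioc (0 : ℝ) s, 0 < f t) :
    ∀ u : E, f s * ‖u‖ ≤ ‖T s u‖ := by
  intro u
  rcases eq_or_ne u 0 with rfl | hu
  · simp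
  have hupos : (0:ℝ) < ‖u‖ := norm_pos_iff.mpr hu
  rcases hs.eq_or_lt with heq | hspos
  · subst heq
    rcases hinit with ⟨h1, h2, h3, h4⟩ | ⟨h1, h2, h3, h4⟩
    · simp [h1, h3]
    · simp [h1, h3]
  -- the Jacobi field and its derivative
  have hv : ∀ t, HasDerivAt (fun t => T t u) (T' t u) t := fun t => by
    simpa using (hT t).clm_apply (hasDerivAt_const t u)
  have hw : ∀ t, HasDerivAt (fun t => T' t u) (-(R t (T t u))) t := fun t => by
    simpa using (hT' t).clm_apply (hasDerivAt_const t u)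
  have hbz : ∀ t, -(Δ t * ‖T t u‖ ^ 2) ≤ ⟪-(R t (T t u)), T t u⟫ := by
    intro t
    rw [inner_neg_left]
    have := hbound t (T t u)
    linarith
  have hvcont : Continuous fun t => T t u :=
    continuous_iff_continuousAt.mpr fun t => (hv t).continuousAt
  have hfcont : Continuous f := continuous_iff_continuousAt.mpr fun t => (hf t).continuousAt
  -- the two scalar limits at 0⁺, by cases on the initial conditions
  have hq0 : Tendsto (fun t => ‖T t u‖ / f t) (𝓝[>] (0:ℝ)) (𝓝 ‖u‖) ∧
      Tendsto (fun t => ⟪T' t u, T t u⟫ / ‖T t u‖ * f t - ‖T t u‖ * f' t)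
        (𝓝[>] (0:ℝ)) (𝓝 0) := by
    rcases hinit with ⟨h1, h2, h3, h4⟩ | ⟨h1, h2, h3, h4⟩
    · -- conjugate-point case
      have hv0 : T 0 u = 0 := by rw [h1]; simp
      have hw0 : T' 0 u = u := by rw [h2]; simp
      have hmono : 𝓝[>] (0:ℝ) ≤ 𝓝[≠] (0:ℝ) :=
        nhdsWithin_mono _ fun x hx => ne_of_gt hx
      have htg : Tendsto (fun t => ‖T t u‖ / t) (𝓝[>] (0:ℝ)) (𝓝 ‖u‖) := by
        have h5 := hasDerivAt_iff_tendsto_slope.mp (hv 0)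
        rw [hw0] at h5
        have h6 : Tendsto (fun t => ‖slope (fun t => T t u) 0 t‖) (𝓝[≠] (0:ℝ)) (𝓝 ‖u‖) :=
          (continuous_norm.tendsto u).comp h5
        refine Tendsto.congr' ?_ (h6.mono_left hmono)
        filter_upwards [self_mem_nhdsWithin] with t ht
        rw [slope_def_module, hv0, sub_zero, sub_zero, norm_smul, norm_inv,
          Real.norm_eq_abs, abs_of_pos ht, inv_mul_eq_div]
      have htf : Tendsto (fun t => f t / t) (𝓝[>] (0:ℝ)) (𝓝 1) := by
        have h5 := hasDerivAt_iff_tendsto_slope.mp (hf 0)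
        rw [h4] at h5
        refine Tendsto.congr' ?_ (h5.mono_left hmono)
        filter_upwards [self_mem_nhdsWithin] with t _
        rw [slope_def_field, h3, sub_zero, sub_zero]
      constructor
      · have h7 := htg.div htf one_ne_zero
        rw [div_one] at h7
        refine Tendsto.congr' ?_ h7
        filter_upwards [self_mem_nhdsWithin] with t ht
        exact div_div_div_cancel_right₀ (ne_of_gt ht) _ _
      · have htfg : Tendsto (fun t => f t / ‖T t u‖) (𝓝[>] (0:ℝ)) (𝓝 (1 / ‖u‖)) := by
          have h7 := htf.div htg hupos.ne'
          refine Tendsto.congr' ?_ h7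
          filter_upwards [self_mem_nhdsWithin] with t ht
          exact div_div_div_cancel_right₀ (ne_of_gt ht) _ _
        have hacont : Tendsto (fun t => ⟪T' t u, T t u⟫) (𝓝[>] (0:ℝ)) (𝓝 0) := by
          have h8 : ContinuousAt (fun t => ⟪T' t u, T t u⟫) 0 :=
            ((hw 0).continuousAt).inner ((hv 0).continuousAt)
          have h9 := h8.tendsto
          rw [hv0, inner_zero_right] at h9
          exact h9.mono_left nhdsWithin_le_nhds
        have hgcont : Tendsto (fun t => ‖T t u‖) (𝓝[>] (0:ℝ)) (𝓝 0) := by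
          have h9 := ((hv 0).continuousAt.norm).tendsto
          rw [hv0, norm_zero] at h9
          exact h9.mono_left nhdsWithin_le_nhds
        have hf'cont : Tendsto f' (𝓝[>] (0:ℝ)) (𝓝 1) := by
          have h9 := (hf' 0).continuousAt.tendsto
          rw [h4] at h9
          exact h9.mono_left nhdsWithin_le_nhds
        have h8 := (hacont.mul htfg).sub (hgcont.mul hf'cont)
        rw [zero_mul, zero_mul, sub_zero] at h8
        refine Tendsto.congr' (Eventually.of_forall fun t => ?_) h8
        ring
    · -- focal case
      have hv0 : T 0 u = u := by rw [h1]; simp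
      have hw0 : T' 0 u = 0 := by rw [h2]; simp
      have hgne : ‖T 0 u‖ ≠ 0 := by rw [hv0]; exact hupos.ne'
      constructor
      · have h8 : ContinuousAt (fun t => ‖T t u‖ / f t) 0 :=
          ((hv 0).continuousAt.norm).div (hf 0).continuousAt (by rw [h3]; exact one_ne_zero)
        have h9 := h8.tendsto
        rw [hv0, h3, div_one] at h9
        exact h9.mono_left nhdsWithin_le_nhds
      · have h8 : ContinuousAt
            (fun t => ⟪T' t u, T t u⟫ / ‖T t u‖ * f t - ‖T t u‖ * f' t) 0 := by
          exact ((((hw 0).continuousAt.inner (hv 0).continuousAt).div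
            ((hv 0).continuousAt.norm) hgne).mul (hf 0).continuousAt).sub
            (((hv 0).continuousAt.norm).mul (hf' 0).continuousAt)
        have h9 := h8.tendsto
        have hval : ⟪T' 0 u, T 0 u⟫ / ‖T 0 u‖ * f 0 - ‖T 0 u‖ * f' 0 = 0 := by
          rw [hv0, hw0, h3, h4]
          simp
        rw [hval] at h9
        exact h9.mono_left nhdsWithin_le_nhds
  obtain ⟨hq0, hW0⟩ := hq0
  have key : ∀ τ, 0 < τ → τ ≤ s → (∀ t ∈ Set.Ioc (0:ℝ) τ, T t u ≠ 0) →
      ‖u‖ * f τ ≤ ‖T τ u‖ := by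
    intro τ h1 h2 h3
    exact jacobi_aux Δ (fun t => T t u) (fun t => T' t u) (fun t => -(R t (T t u)))
      f f' ‖u‖ hv hw hbz hf hf' hq0 hW0 τ h1
      (fun t ht => hfc t ⟨ht.1, ht.2.trans h2⟩) h3
  have hpos : ∀ t ∈ Set.Ioc (0:ℝ) s, T t u ≠ 0 := by
    by_contra hcon
    push_neg at hcon
    obtain ⟨t₀, ht₀, hvt₀⟩ := hcon
    have hev : ∀ᶠ t in 𝓝[>] (0:ℝ), T t u ≠ 0 := by
      have h8 : ∀ᶠ t in 𝓝[>] (0:ℝ), 0 < ‖T t u‖ / f t :=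
        hq0.eventually (eventually_gt_nhds hupos)
      filter_upwards [h8] with t ht hzero
      rw [hzero] at ht
      simp at ht
    obtain ⟨δ, hδ0, hδ⟩ := (nhdsGT_basis (0:ℝ)).eventually_iff.mp hev
    set Z := Set.Icc δ s ∩ (fun t => T t u) ⁻¹' {0} with hZ
    have hZne : Z.Nonempty := by
      refine ⟨t₀, ⟨⟨?_, ht₀.2⟩, hvt₀⟩⟩
      by_contra hlt
      push_neg at hlt
      exact hδ ⟨ht₀.1, hlt⟩ hvt₀
    have hZclosed : IsClosed Z := isClosed_Icc.inter (isClosed_singleton.preimage hvcont)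
    have hZbdd : BddBelow Z := ⟨δ, fun x hx => hx.1.1⟩
    set t₁ := sInf Z with ht₁def
    have ht₁Z : t₁ ∈ Z := hZclosed.csInf_mem hZne hZbdd
    have ht₁pos : 0 < t₁ := lt_of_lt_of_le hδ0 ht₁Z.1.1
    have hless : ∀ t ∈ Set.Ioo (0:ℝ) t₁, T t u ≠ 0 := by
      intro t ht hzero
      rcases lt_or_ge t δ with h | h
      · exact hδ ⟨ht.1, h⟩ hzero
      · have hmem : t ∈ Z := ⟨⟨h, le_trans ht.2.le ht₁Z.1.2⟩, hzero⟩
        exact absurd (csInf_le hZbdd hmem) (not_le.mpr ht.2)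
    have hlim1 : Tendsto (fun τ => ‖u‖ * f τ) (𝓝[<] t₁) (𝓝 (‖u‖ * f t₁)) :=
      ((continuous_const.mul hfcont).tendsto t₁).mono_left nhdsWithin_le_nhds
    have hlim2 : Tendsto (fun τ => ‖T τ u‖) (𝓝[<] t₁) (𝓝 ‖T t₁ u‖) :=
      (hvcont.norm.tendsto t₁).mono_left nhdsWithin_le_nhds
    have hle : ‖u‖ * f t₁ ≤ ‖T t₁ u‖ := by
      refine le_of_tendsto_of_tendsto hlim1 hlim2 ?_
      filter_upwards [Ioo_mem_nhdsLT_of_mem (right_mem_Ioc.mpr ht₁pos)] with τ hτ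
      exact key τ hτ.1 (le_trans hτ.2.le ht₁Z.1.2)
        (fun t ht => hless t ⟨ht.1, lt_of_le_of_lt ht.2 hτ.2⟩)
    have hfpos1 : 0 < f t₁ := hfc t₁ ⟨ht₁pos, ht₁Z.1.2⟩
    have hzero : T t₁ u = 0 := ht₁Z.2
    rw [hzero, norm_zero] at hle
    nlinarith [hupos, hfpos1, hle]
  have hfin := key s hspos le_rfl hpos
  linarith [hfin, mul_comm (f s) ‖u‖]
end

section
/- In the Hilbert manifold M = {x ∈ ℓ² : x₁² + x₂² + Σ_{i≥3} (1 − 1/i)² x_i² = 1}, along the geodesic γ(s) = sin(s)e₁ + cos(s)e₂ and with N the geodesic submanifold determined by γ'(0), the points γ(s_k) with s_k = kπ/(2(k−1)) are monofocal, s_k → π/2, and γ(π/2) is epifocal but not monofocal (a pathological point); in particular monofocal points may accumulate at an epifocal point that is not monofocal. -/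
open scoped RealInnerProductSpace

private lemma sqrt_coeff (k : ℕ) :
    Real.sqrt ((1 - 1 / ((k : ℝ) + 3)) ^ 2) = 1 - 1 / ((k : ℝ) + 3) := by
  have h3 : (0:ℝ) < (k : ℝ) + 3 := by positivity
  have : 1 / ((k : ℝ) + 3) ≤ 1 := by
    rw [div_le_one h3]; linarith [Nat.cast_nonneg (α := ℝ) k]
  rw [Real.sqrt_sq (by linarith)]

private lemma coeff_eq_sin (k : ℕ) :
    Real.cos ((1 - 1 / ((k : ℝ) + 3)) * (Real.pi / 2)) =
      Real.sin (Real.pi / (2 * ((k : ℝ) + 3))) := by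
  have h3 : ((k : ℝ) + 3) ≠ 0 := by positivity
  have : (1 - 1 / ((k : ℝ) + 3)) * (Real.pi / 2) =
      Real.pi / 2 - Real.pi / (2 * ((k : ℝ) + 3)) := by field_simp
  rw [this, Real.cos_pi_div_two_sub]

private lemma coeff_pos (k : ℕ) :
    0 < Real.cos ((1 - 1 / ((k : ℝ) + 3)) * (Real.pi / 2)) := by
  rw [coeff_eq_sin]
  apply Real.sin_pos_of_pos_of_lt_pi
  · positivity
  · have h3 : (1:ℝ) < 2 * ((k : ℝ) + 3) := by
      have := Nat.cast_nonneg (α := ℝ) k; linarith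
    calc Real.pi / (2 * ((k : ℝ) + 3)) < Real.pi / 1 := by
          apply div_lt_div_of_pos_left Real.pi_pos (by norm_num) h3
      _ = Real.pi := by ring
    

/-- The pathological example on the ellipsoid
`M = {x ∈ ℓ² : x₁² + x₂² + Σ_{i≥3} aᵢ xᵢ² = 1}` with `a_k = (1 - 1/k)²`, along the geodesic
`γ(s) = sin(s)e₁ + cos(s)e₂`, with `N` the geodesic submanifold determined by `γ'(0)`.
Reindexing the normal coordinates by `k ↦ k + 3`, the differential of the normal
exponential map is the diagonal operator `D s : (b_k) ↦ (b_k cos(√a_{k+3} s))`.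
Then the points `γ(s_k)`, `s_k = (k+3)π/(2(k+2))`, are monofocal (`D (s_k)` not injective),
`s_k → π/2`, and `γ(π/2)` is epifocal (`D (π/2)` not surjective) but not monofocal
(`D (π/2)` injective): monofocal points accumulate at a pathological point. -/
theorem ellipsoid_pathological_point
    (D : ℝ → (lp (fun _ : ℕ => ℝ) 2 →L[ℝ] lp (fun _ : ℕ => ℝ) 2))
    (hD : ∀ (s : ℝ) (f : lp (fun _ : ℕ => ℝ) 2) (k : ℕ),
      (D s f : ∀ _ : ℕ, ℝ) k =
        Real.cos (Real.sqrt ((1 - 1 / ((k : ℝ) + 3)) ^ 2) * s) * (f : ∀ _ : ℕ, ℝ) k) :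
    (∀ k : ℕ, ¬ Function.Injective
        (D (((k : ℝ) + 3) * Real.pi / (2 * ((k : ℝ) + 2))))) ∧
    Filter.Tendsto (fun k : ℕ => ((k : ℝ) + 3) * Real.pi / (2 * ((k : ℝ) + 2)))
      Filter.atTop (nhds (Real.pi / 2)) ∧
    Function.Injective (D (Real.pi / 2)) ∧
    ¬ Function.Surjective (D (Real.pi / 2)) := by
  refine ⟨?_, ?_, ?_, ?_⟩
  · -- monofocal at s_k
    intro k hinj
    set s : ℝ := ((k : ℝ) + 3) * Real.pi / (2 * ((k : ℝ) + 2))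
    have h2 : ((k : ℝ) + 2) ≠ 0 := by positivity
    have h3 : ((k : ℝ) + 3) ≠ 0 := by positivity
    have harg : Real.sqrt ((1 - 1 / ((k : ℝ) + 3)) ^ 2) * s = Real.pi / 2 := by
      rw [sqrt_coeff]
      show (1 - 1 / ((k : ℝ) + 3)) * (((k : ℝ) + 3) * Real.pi / (2 * ((k : ℝ) + 2)))
        = Real.pi / 2
      field_simp
      ring
    have hz : D s (lp.single 2 k (1:ℝ)) = D s 0 := by
      apply lp.ext
      funext j
      rw [hD, hD]
      by_cases hj : j = k
      · subst hj
        rw [harg, Real.cos_pi_div_two]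
        simp
      · rw [lp.single_apply_ne (E := fun _ : ℕ => ℝ) 2 k (1:ℝ) (hij := hj)]
        simp
    have := hinj hz
    have h1 : (lp.single 2 k (1:ℝ) : ∀ _ : ℕ, ℝ) k = ((0 : lp (fun _ : ℕ => ℝ) 2) : ∀ _ : ℕ, ℝ) k := by
      rw [this]
    rw [lp.single_apply_self] at h1
    simp at h1
  · -- limit
    have heq : ∀ k : ℕ, ((k : ℝ) + 3) * Real.pi / (2 * ((k : ℝ) + 2))
        = Real.pi / 2 + (Real.pi / 2) * (1 / ((k : ℝ) + 2)) := by
      intro k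
      have h2 : ((k : ℝ) + 2) ≠ 0 := by positivity
      field_simp
      ring
    simp only [heq]
    have ht : Filter.Tendsto (fun k : ℕ => (k : ℝ) + 2) Filter.atTop Filter.atTop :=
      Filter.tendsto_atTop_add_const_right _ 2 tendsto_natCast_atTop_atTop
    have h0 : Filter.Tendsto (fun k : ℕ => 1 / ((k : ℝ) + 2)) Filter.atTop (nhds 0) := by
      simpa [one_div, Pi.inv_def] using ht.inv_tendsto_atTop
    have := (h0.const_mul (Real.pi / 2)).const_add (Real.pi / 2)
    simpa [mul_comm] using this
  · -- injective at π/2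
    intro f g h
    apply lp.ext
    funext j
    have hc : (D (Real.pi / 2) f : ∀ _ : ℕ, ℝ) j = (D (Real.pi / 2) g : ∀ _ : ℕ, ℝ) j := by
      rw [h]
    rw [hD, hD, sqrt_coeff] at hc
    exact mul_left_cancel₀ (ne_of_gt (coeff_pos j)) hc
  · -- not surjective at π/2
    intro hsurj
    set c : ℕ → ℝ := fun k => Real.cos ((1 - 1 / ((k : ℝ) + 3)) * (Real.pi / 2)) with hcdef
    have hmem : Memℓp c 2 := by
      apply memℓp_gen
      have hsum : Summable (fun k : ℕ => (Real.pi / (2 * ((k : ℝ) + 3))) ^ 2) := by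
        have hb : Summable (fun k : ℕ => (Real.pi / 2) ^ 2 * (1 / ((k : ℝ) + 3) ^ 2)) := by
          apply Summable.mul_left
          have : Summable (fun k : ℕ => 1 / ((k : ℝ) ^ 2)) :=
            Real.summable_one_div_nat_pow.mpr one_lt_two
          have := (summable_nat_add_iff (f := fun k : ℕ => 1 / ((k : ℝ) ^ 2)) 3).mpr this
          refine this.congr (fun k => ?_)
          push_cast
          ring
        convert hb using 2 with k
        field_simp
      apply Summable.of_nonneg_of_le (fun k => by positivity) _ hsum
      intro k
      have hck : 0 ≤ c k := le_of_lt (coeff_pos k)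
      have hle : c k ≤ Real.pi / (2 * ((k : ℝ) + 3)) := by
        rw [hcdef]
        simp only
        rw [coeff_eq_sin]
        exact Real.sin_le (by positivity)
      have h2 : ENNReal.toReal 2 = 2 := by norm_num
      rw [h2, Real.norm_eq_abs, abs_of_nonneg hck,
        Real.rpow_two]
      apply pow_le_pow_left₀ hck hle
    obtain ⟨f, hf⟩ := hsurj ⟨c, hmem⟩
    have hone : ∀ k, (f : ∀ _ : ℕ, ℝ) k = 1 := by
      intro k
      have : (D (Real.pi / 2) f : ∀ _ : ℕ, ℝ) k = c k := by rw [hf]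
      rw [hD, sqrt_coeff] at this
      have h1 : Real.cos ((1 - 1 / ((k : ℝ) + 3)) * (Real.pi / 2)) * (f : ∀ _ : ℕ, ℝ) k
          = Real.cos ((1 - 1 / ((k : ℝ) + 3)) * (Real.pi / 2)) * 1 := by
        rw [mul_one]; exact this
      exact mul_left_cancel₀ (ne_of_gt (coeff_pos k)) h1
    have hsum : Summable (fun k : ℕ => ‖(f : ∀ _ : ℕ, ℝ) k‖ ^ (2 : ℝ)) := by
      have := (lp.memℓp f).summable (p := 2) (by norm_num)
      simpa using this
    simp only [hone, norm_one, Real.one_rpow] at hsum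
    have := hsum.tendsto_atTop_zero
    have h01 : (1:ℝ) = 0 := tendsto_nhds_unique tendsto_const_nhds this
    norm_num at h01
end
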